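/- For real α > 0 and integer n ≥ 2, the following convolution identity holds: n^(α-1) · (f_{α/n} * f_{(α+1)/n} * ⋯ * f_{(α+n-1)/n}) = f_{1/n} * f_{2/n} * ⋯ * f_{(n-1)/n} * f_α, where f_β(t) = t^(β-1)·1_{t>0}. -/

import Mathlib

/-- Convolution of functions supported on the positive reals. -/
noncomputable def conv (f g : ℝ → ℝ) : ℝ → ℝ := fun t => ∫ τ in (0:ℝ)..t, f τ * g (t - τ)

/-- `fp α t = t^(α-1)` for `t > 0`, and `0` otherwise. -/
noncomputable def fp (α : ℝ) : ℝ → ℝ := fun t => if 0 < t then t ^ (α - 1) else 0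

/-- Convolution `fp (α 0) * fp (α 1) * ⋯ * fp (α n)` of `n+1` power functions. -/
noncomputable def multiConv : (n : ℕ) → (Fin (n + 1) → ℝ) → (ℝ → ℝ)
  | 0, α => fp (α 0)
  | n + 1, α => conv (fp (α 0)) (multiConv n (fun i => α i.succ))


open Real MeasureTheory intervalIntegral Set

lemma real_beta_scaled {a b t : ℝ} (ha : 0 < a) (hb : 0 < b) (ht : 0 < t) :
    ∫ x in (0:ℝ)..t, x ^ (a-1) * (t - x) ^ (b-1) =
      Real.Gamma a * Real.Gamma b / Real.Gamma (a+b) * t ^ (a+b-1) := by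
  have ha' : 0 < (a:ℂ).re := by simpa using ha
  have hb' : 0 < (b:ℂ).re := by simpa using hb
  have hab : Complex.Gamma ((a:ℂ)+(b:ℂ)) ≠ 0 := by
    apply Complex.Gamma_ne_zero_of_re_pos; simpa using add_pos ha hb
  have hβ : Complex.betaIntegral a b =
      Complex.Gamma a * Complex.Gamma b / Complex.Gamma ((a:ℂ)+(b:ℂ)) := by
    rw [eq_div_iff hab, mul_comm, Complex.Gamma_mul_Gamma_eq_betaIntegral ha' hb']
  have key := Complex.betaIntegral_scaled (a:ℂ) (b:ℂ) ht
  have hL : (∫ x in (0:ℝ)..t, (x : ℂ) ^ ((a:ℂ) - 1) * ((t : ℂ) - x) ^ ((b:ℂ) - 1)) =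
      ((∫ x in (0:ℝ)..t, x ^ (a-1) * (t - x) ^ (b-1) : ℝ) : ℂ) := by
    rw [← intervalIntegral.integral_ofReal]
    apply intervalIntegral.integral_congr
    intro x hx
    rw [Set.uIcc_of_le ht.le] at hx
    have h1 := Complex.ofReal_cpow hx.1 (a-1)
    have h2 := Complex.ofReal_cpow (sub_nonneg.2 hx.2) (b-1)
    push_cast at h1 h2 ⊢
    rw [h1, h2]
  have hR : ((t : ℂ)) ^ ((a:ℂ) + (b:ℂ) - 1) = ((t ^ (a+b-1) : ℝ) : ℂ) := by
    have h1 := Complex.ofReal_cpow ht.le (a+b-1)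
    push_cast at h1 ⊢
    rw [h1]
  rw [hL, hβ, hR] at key
  have : ((∫ x in (0:ℝ)..t, x ^ (a-1) * (t - x) ^ (b-1) : ℝ) : ℂ) =
      ((Real.Gamma a * Real.Gamma b / Real.Gamma (a+b) * t ^ (a+b-1) : ℝ) : ℂ) := by
    rw [key]
    push_cast [Complex.Gamma_ofReal, ← Complex.ofReal_add]
    ring
  exact_mod_cast this

open Real MeasureTheory intervalIntegral Set

lemma fp_of_nonpos {a t : ℝ} (ht : t ≤ 0) : fp a t = 0 := by
  rw [fp, if_neg (not_lt.2 ht)]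

lemma conv_of_nonpos (f g : ℝ → ℝ) (hf : ∀ t ≤ (0:ℝ), f t = 0) {t : ℝ} (ht : t ≤ 0) :
    conv f g t = 0 := by
  rw [conv]
  have h0 : Set.EqOn (fun τ => f τ * g (t - τ)) 0 (Set.uIcc 0 t) := by
    intro x hx
    rw [Set.uIcc_of_ge ht] at hx
    simp [hf x hx.2]
  rw [intervalIntegral.integral_congr h0]; simp

lemma multiConv_of_nonpos : ∀ (n : ℕ) (α : Fin (n+1) → ℝ) {t : ℝ}, t ≤ 0 →
    multiConv n α t = 0
  | 0, α, t, ht => fp_of_nonpos ht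
  | n+1, α, t, ht => conv_of_nonpos _ _ (fun s hs => fp_of_nonpos hs) ht

lemma conv_fp {a b : ℝ} (ha : 0 < a) (hb : 0 < b) :
    conv (fp a) (fp b) = fun t =>
      Real.Gamma a * Real.Gamma b / Real.Gamma (a+b) * fp (a+b) t := by
  funext t
  rcases le_or_gt t 0 with ht | ht
  · rw [conv_of_nonpos _ _ (fun s hs => fp_of_nonpos hs) ht, fp_of_nonpos ht, mul_zero]
  · rw [fp, if_pos ht, ← real_beta_scaled ha hb ht, conv]
    apply intervalIntegral.integral_congr_ae
    filter_upwards [MeasureTheory.compl_mem_ae_iff.mpr (measure_singleton t)] with x hx hx'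
    rw [Set.uIoc_of_le ht.le] at hx'
    have hxt : x < t := lt_of_le_of_ne hx'.2 (by simpa using hx)
    rw [fp, fp, if_pos hx'.1, if_pos (by linarith : 0 < t - x)]

open Real

lemma conv_const_mul_right (f g : ℝ → ℝ) (c : ℝ) :
    conv f (fun t => c * g t) = fun t => c * conv f g t := by
  funext t
  simp only [conv]
  rw [← intervalIntegral.integral_const_mul]
  congr 1; funext τ; ring

lemma conv_const_mul_left (f g : ℝ → ℝ) (c : ℝ) :
    conv (fun t => c * f t) g = fun t => c * conv f g t := by
  funext t
  simp only [conv]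
  rw [← intervalIntegral.integral_const_mul]
  congr 1; funext τ; ring

lemma aux_alg {P G0 GS' GS ft : ℝ} (h : GS' ≠ 0) :
    P / GS' * (G0 * GS' / GS * ft) = G0 * P / GS * ft := by
  have h2 : P / GS' * (G0 * GS' / GS * ft) = GS' / GS' * (G0 * P / GS * ft) := by ring
  rw [h2, div_self h, one_mul]

lemma multiConv_eq : ∀ (n : ℕ) (α : Fin (n+1) → ℝ), (∀ i, 0 < α i) →
    multiConv n α = fun t =>
      (∏ i, Real.Gamma (α i)) / Real.Gamma (∑ i, α i) * fp (∑ i, α i) t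
  | 0, α, hpos => by
    funext t
    rw [multiConv, Fin.prod_univ_one, Fin.sum_univ_one,
      div_self (Real.Gamma_pos_of_pos (hpos 0)).ne', one_mul]
  | n+1, α, hpos => by
    have htail : ∀ i : Fin (n+1), 0 < α i.succ := fun i => hpos i.succ
    have hS' : 0 < ∑ i : Fin (n+1), α i.succ :=
      Finset.sum_pos (fun i _ => htail i) Finset.univ_nonempty
    rw [multiConv, multiConv_eq n _ htail, conv_const_mul_right, conv_fp (hpos 0) hS']
    funext t
    conv_rhs => rw [Fin.sum_univ_succ, Fin.prod_univ_succ]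
    have h1 : Real.Gamma (∑ i : Fin (n+1), α i.succ) ≠ 0 :=
      (Real.Gamma_pos_of_pos hS').ne'
    exact aux_alg h1

open Real Set

lemma logGamma_affine_convexOn {c d : ℝ} (hc : 0 < c) (hd : 0 ≤ d) :
    ConvexOn ℝ (Set.Ioi 0) (fun x => Real.log (Real.Gamma (c * x + d))) := by
  refine ⟨convex_Ioi 0, fun x hx y hy a b ha hb hab => ?_⟩
  have hx' : c * x + d ∈ Set.Ioi (0:ℝ) := by
    have := mem_Ioi.mp hx; simp only [mem_Ioi]; nlinarith
  have hy' : c * y + d ∈ Set.Ioi (0:ℝ) := by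
    have := mem_Ioi.mp hy; simp only [mem_Ioi]; nlinarith
  have h := Real.convexOn_log_Gamma.2 hx' hy' ha hb hab
  simp only [Function.comp_apply, smul_eq_mul] at h ⊢
  have hkey : c * (a * x + b * y) + d = a * (c * x + d) + b * (c * y + d) := by
    linear_combination (-d) * hab
  rw [hkey]
  exact h

lemma sum_convexOn {ι : Type*} (s : Finset ι) (f : ι → ℝ → ℝ)
    (h : ∀ i ∈ s, ConvexOn ℝ (Set.Ioi (0:ℝ)) (f i)) :
    ConvexOn ℝ (Set.Ioi (0:ℝ)) (fun x => ∑ i ∈ s, f i x) := by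
  classical
  induction s using Finset.induction with
  | empty => simpa using convexOn_const (0:ℝ) (convex_Ioi (0:ℝ))
  | @insert j s hni ih =>
    simp_rw [Finset.sum_insert hni]
    exact (h j (Finset.mem_insert_self j s)).add
      (ih fun i hi => h i (Finset.mem_insert_of_mem hi))

/-- Auxiliary function for the Gauss multiplication formula. -/
noncomputable def mulGamma (n : ℕ) (x : ℝ) : ℝ :=
  (n:ℝ) ^ (x - 1) * (∏ k ∈ Finset.range n, Real.Gamma ((x + k) / n)) /
    ∏ k ∈ Finset.range (n - 1), Real.Gamma ((1 + (k:ℝ)) / n)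

section mulGamma
variable {n : ℕ} (hn : 0 < n)
include hn

lemma mulGammaC_pos : 0 < ∏ k ∈ Finset.range (n - 1), Real.Gamma ((1 + (k:ℝ)) / n) :=
  Finset.prod_pos fun k _ => Real.Gamma_pos_of_pos (by positivity)

lemma mulGamma_prod_pos {x : ℝ} (hx : 0 < x) :
    0 < ∏ k ∈ Finset.range n, Real.Gamma ((x + k) / n) :=
  Finset.prod_pos fun k _ => Real.Gamma_pos_of_pos (by positivity)

lemma mulGamma_pos {x : ℝ} (hx : 0 < x) : 0 < mulGamma n x :=
  div_pos (mul_pos (Real.rpow_pos_of_pos (by exact_mod_cast hn) _)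
    (mulGamma_prod_pos hn hx)) (mulGammaC_pos hn)

lemma mulGamma_one : mulGamma n 1 = 1 := by
  have hn' : (n:ℝ) ≠ 0 := by positivity
  have h1 : ((1:ℝ) + ((n - 1 : ℕ):ℝ)) / n = 1 := by
    rw [Nat.cast_sub hn]
    push_cast
    field_simp
    ring
  have hsplit : ∏ k ∈ Finset.range n, Real.Gamma (((1:ℝ) + (k:ℝ)) / n) =
      (∏ k ∈ Finset.range (n - 1), Real.Gamma (((1:ℝ) + (k:ℝ)) / n)) *
        Real.Gamma (((1:ℝ) + ((n - 1 : ℕ):ℝ)) / n) := by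
    rw [← Finset.prod_range_succ, Nat.sub_add_cancel hn]
  rw [mulGamma, sub_self, Real.rpow_zero, one_mul, hsplit, h1, Real.Gamma_one, mul_one,
    div_self (mulGammaC_pos hn).ne']

lemma mulGamma_add_one {x : ℝ} (hx : 0 < x) : mulGamma n (x + 1) = x * mulGamma n x := by
  have hn' : (0:ℝ) < n := by exact_mod_cast hn
  set g : ℕ → ℝ := fun k => Real.Gamma ((x + k) / n) with hg
  have h1 : ∏ k ∈ Finset.range n, Real.Gamma ((x + 1 + k) / n) =
      ∏ k ∈ Finset.range n, g (k + 1) := by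
    refine Finset.prod_congr rfl fun k _ => ?_
    simp only [hg]
    push_cast
    ring_nf
  have h2 : (∏ k ∈ Finset.range n, g (k + 1)) * g 0 = (∏ k ∈ Finset.range n, g k) * g n :=
    by rw [← Finset.prod_range_succ' g n, Finset.prod_range_succ]
  have hg0 : g 0 = Real.Gamma (x / n) := by simp [hg]
  have hgn : g n = x / n * g 0 := by
    have hxn : (x + (n:ℝ)) / n = x / n + 1 := by field_simp
    simp only [hg, Nat.cast_zero, add_zero]
    rw [hxn, Real.Gamma_add_one (by positivity)]
  have hg0' : g 0 ≠ 0 := by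
    rw [hg0]; exact (Real.Gamma_pos_of_pos (by positivity)).ne'
  have h3 : ∏ k ∈ Finset.range n, g (k + 1) =
      (∏ k ∈ Finset.range n, g k) * (x / n) := by
    refine mul_right_cancel₀ hg0' ?_
    rw [h2, hgn]
    ring
  have h4 : (n:ℝ) ^ (x + 1 - 1) = (n:ℝ) ^ (x - 1) * n := by
    rw [show x + 1 - 1 = (x - 1) + 1 by ring, Real.rpow_add_one hn'.ne']
  rw [mulGamma, mulGamma, h1, h3, h4]
  field_simp
  ring

lemma mulGamma_logConvex : ConvexOn ℝ (Set.Ioi (0:ℝ)) (Real.log ∘ mulGamma n) := by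
  have hn' : (0:ℝ) < n := by exact_mod_cast hn
  have heq : Set.EqOn (Real.log ∘ mulGamma n)
      (fun x => ((Real.log n * x + (-Real.log n)) +
        ∑ k ∈ Finset.range n, Real.log (Real.Gamma ((1/n) * x + k/n))) +
        (- Real.log (∏ k ∈ Finset.range (n - 1), Real.Gamma ((1 + (k:ℝ)) / n))))
      (Set.Ioi 0) := by
    intro x hx
    have hx' : (0:ℝ) < x := hx
    simp only [Function.comp_apply, mulGamma]
    rw [Real.log_div (mul_pos (Real.rpow_pos_of_pos hn' _)
        (mulGamma_prod_pos hn hx')).ne' (mulGammaC_pos hn).ne',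
      Real.log_mul (Real.rpow_pos_of_pos hn' _).ne' (mulGamma_prod_pos hn hx').ne',
      Real.log_rpow hn']
    have hlogprod : Real.log (∏ k ∈ Finset.range n, Real.Gamma ((x + (k:ℝ)) / n)) =
        ∑ k ∈ Finset.range n, Real.log (Real.Gamma ((x + (k:ℝ)) / n)) :=
      Real.log_prod (fun k _ => (Real.Gamma_pos_of_pos
        (show (0:ℝ) < (x + (k:ℝ))/n by positivity)).ne')
    rw [hlogprod]
    have : ∀ k ∈ Finset.range n, Real.log (Real.Gamma ((x + (k:ℝ)) / n)) =
        Real.log (Real.Gamma ((1/n) * x + (k:ℝ)/n)) := by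
      intro k _
      congr 2
      field_simp
    rw [Finset.sum_congr rfl this]
    ring
  refine ConvexOn.congr ?_ heq.symm
  refine ConvexOn.add_const (ConvexOn.add ?_ ?_) _
  · exact ((convexOn_id (convex_Ioi 0)).smul
      (Real.log_nonneg (by exact_mod_cast hn))).add_const _
  · exact sum_convexOn _ _ fun k _ =>
      logGamma_affine_convexOn (one_div_pos.mpr hn') (by positivity)

lemma mulGamma_eq_Gamma {x : ℝ} (hx : 0 < x) : mulGamma n x = Real.Gamma x :=
  Real.eq_Gamma_of_log_convex (mulGamma_logConvex hn)
    (fun {y} hy => mulGamma_add_one hn hy) (fun {y} hy => mulGamma_pos hn hy)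
    (mulGamma_one hn) hx

end mulGamma

open Real Set

/-- Writing `n = m + 2` (so that `n ≥ 2`), for `α > 0`:
`n^(α-1) · (f_{α/n} * f_{(α+1)/n} * ⋯ * f_{(α+n-1)/n}) = f_{1/n} * ⋯ * f_{(n-1)/n} * f_α`. -/
theorem stmt_11 (α : ℝ) (hα : 0 < α) (m : ℕ) :
    (fun t => ((m : ℝ) + 2) ^ (α - 1) *
        multiConv (m + 1) (fun i : Fin (m + 2) => (α + (i : ℕ)) / ((m : ℝ) + 2)) t) =
      conv (multiConv m (fun i : Fin (m + 1) => ((i : ℕ) + 1 : ℝ) / ((m : ℝ) + 2))) (fp α) := by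
  have hN : (0:ℝ) < (m:ℝ) + 2 := by positivity
  have hposα : ∀ i : Fin (m + 2), 0 < (α + ((i:ℕ):ℝ)) / ((m:ℝ) + 2) := fun i => by positivity
  have hposβ : ∀ i : Fin (m + 1), 0 < (((i:ℕ):ℝ) + 1) / ((m:ℝ) + 2) := fun i => by positivity
  set s : ℝ := ∑ i : Fin (m + 1), (((i:ℕ):ℝ) + 1) / ((m:ℝ) + 2) with hs_def
  have hs : 0 < s := Finset.sum_pos (fun i _ => hposβ i) Finset.univ_nonempty
  have hsum : (∑ i : Fin (m + 2), (α + ((i:ℕ):ℝ)) / ((m:ℝ) + 2)) = α + s := by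
    rw [hs_def, Fin.sum_univ_eq_sum_range (fun k => (α + (k:ℝ)) / ((m:ℝ) + 2)) (m+2),
      Fin.sum_univ_eq_sum_range (fun k => ((k:ℝ) + 1) / ((m:ℝ) + 2)) (m+1),
      Finset.sum_range_succ' (fun k => (α + (k:ℝ)) / ((m:ℝ) + 2)) (m+1)]
    push_cast
    have h1 : ∀ k : ℕ, (α + ((k:ℝ) + 1)) / ((m:ℝ) + 2)
        = α / ((m:ℝ) + 2) + ((k:ℝ) + 1) / ((m:ℝ) + 2) := fun k => by ring
    simp_rw [h1, Finset.sum_add_distrib, Finset.sum_const, Finset.card_range, nsmul_eq_mul]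
    push_cast
    field_simp
    ring
  -- Gauss multiplication formula
  have hC : (∏ i : Fin (m + 1), Real.Gamma ((((i:ℕ):ℝ) + 1) / ((m:ℝ) + 2))) =
      ∏ k ∈ Finset.range (m + 1), Real.Gamma ((1 + (k:ℝ)) / ((m:ℝ) + 2)) := by
    rw [Fin.prod_univ_eq_prod_range (fun k => Real.Gamma (((k:ℝ) + 1) / ((m:ℝ) + 2))) (m+1)]
    exact Finset.prod_congr rfl fun k _ => by rw [add_comm ((k:ℝ)) 1]
  have hP : (∏ i : Fin (m + 2), Real.Gamma ((α + ((i:ℕ):ℝ)) / ((m:ℝ) + 2))) =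
      ∏ k ∈ Finset.range (m + 2), Real.Gamma ((α + (k:ℝ)) / ((m:ℝ) + 2)) :=
    Fin.prod_univ_eq_prod_range (fun k => Real.Gamma ((α + (k:ℝ)) / ((m:ℝ) + 2))) (m+2)
  have hgauss : ((m:ℝ) + 2) ^ (α - 1) *
      (∏ i : Fin (m + 2), Real.Gamma ((α + ((i:ℕ):ℝ)) / ((m:ℝ) + 2))) =
      (∏ i : Fin (m + 1), Real.Gamma ((((i:ℕ):ℝ) + 1) / ((m:ℝ) + 2))) * Real.Gamma α := by
    have hCpos : (0:ℝ) < ∏ k ∈ Finset.range (m + 1), Real.Gamma ((1 + (k:ℝ)) / ((m:ℝ) + 2)) :=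
      Finset.prod_pos fun k _ => Real.Gamma_pos_of_pos (by positivity)
    have h := mulGamma_eq_Gamma (n := m + 2) (Nat.succ_pos _) hα
    rw [mulGamma] at h
    have hcast : ((m + 2 : ℕ) : ℝ) = (m:ℝ) + 2 := by push_cast; ring
    rw [show m + 2 - 1 = m + 1 from rfl, hcast] at h
    rw [div_eq_iff hCpos.ne'] at h
    rw [hC, hP, h]
    ring
  -- both sides via multiConv_eq
  rw [multiConv_eq (m + 1) _ hposα, multiConv_eq m _ hposβ, conv_const_mul_left,
    conv_fp hs hα]
  funext t
  rw [← hs_def, hsum, add_comm s α]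
  have hΓs : Real.Gamma s ≠ 0 := (Real.Gamma_pos_of_pos hs).ne'
  have hΓαs : Real.Gamma (α + s) ≠ 0 := (Real.Gamma_pos_of_pos (by linarith)).ne'
  have hexp : (∏ i : Fin (m + 1), Real.Gamma ((((i:ℕ):ℝ) + 1) / ((m:ℝ) + 2))) / Real.Gamma s *
      (Real.Gamma s * Real.Gamma α / Real.Gamma (α + s) * fp (α + s) t) =
      ((∏ i : Fin (m + 1), Real.Gamma ((((i:ℕ):ℝ) + 1) / ((m:ℝ) + 2))) * Real.Gamma α) /
        Real.Gamma (α + s) * fp (α + s) t := by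
    field_simp
  rw [hexp, ← hgauss]
  ring
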